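/- Let A be a graded Artinian K-algebra and z ∈ A₁ a linear form. The kernel of the multiplication map ×z* on Gr_{(z)}(A) equals ⨁_{i=1}^{p} ((z^{i−1}) ∩ (0:z) + (z^i))/(z^i). -/

import Mathlib

set_option maxHeartbeats 1600000


open Module LinearMap

/-- The `i`-th graded piece `(z^i)/(z^{i+1})` of the form ring `Gr_{(z)}(A)`,
as a `K`-vector space. -/
abbrev grPiece (K : Type*) (A : Type*) [Field K] [CommRing A] [Algebra K A]
    (z : A) (i : ℕ) :=
  ((Ideal.span {z ^ i}).restrictScalars K) ⧸
    Submodule.comap ((Ideal.span {z ^ i}).restrictScalars K).subtype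
      ((Ideal.span {z ^ (i + 1)}).restrictScalars K)

/-- `A` a graded Artinian `K`-algebra, `z ∈ A₁` with `z^p = 0`.  The
kernel of the multiplication map `×z*` on `Gr_{(z)}(A) = ⨁ᵢ (z^i)/(z^{i+1})` equals
`⨁ᵢ ((z^{i-1}) ∩ (0:z) + (z^i))/(z^i)` (indexing the summand inside `(z^i)/(z^{i+1})`
as the image of `(z^i) ∩ (0:z) + (z^{i+1})`). -/
theorem ker_of_formRing_multiplication (K A : Type*) [Field K] [CommRing A] [Algebra K A]
    [FiniteDimensional K A] (𝒜 : ℕ → Submodule K A) [GradedAlgebra 𝒜]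
    (z : A) (hz1 : z ∈ 𝒜 1) (p : ℕ) (hp : 0 < p) (hzp : z ^ p = 0)
    (g : ∀ i : ℕ, grPiece K A z i →ₗ[K] grPiece K A z (i + 1))
    (hg : ∀ (i : ℕ) (a : A) (ha : a ∈ (Ideal.span {z ^ i}).restrictScalars K)
        (hza : z * a ∈ (Ideal.span {z ^ (i + 1)}).restrictScalars K),
      g i (Submodule.Quotient.mk ⟨a, ha⟩) = Submodule.Quotient.mk ⟨z * a, hza⟩)
    (E : Module.End K (DirectSum ℕ (fun i => grPiece K A z i)))
    (hE : E = DirectSum.toModule K ℕ (DirectSum ℕ (fun i => grPiece K A z i))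
      (fun i => (DirectSum.lof K ℕ (fun j => grPiece K A z j) (i + 1)) ∘ₗ g i)) :
    LinearMap.ker E =
      ⨆ i : ℕ, Submodule.map (DirectSum.lof K ℕ (fun j => grPiece K A z j) i)
        (Submodule.map
          (Submodule.mkQ (Submodule.comap ((Ideal.span {z ^ i}).restrictScalars K).subtype
            ((Ideal.span {z ^ (i + 1)}).restrictScalars K)))
          (Submodule.comap ((Ideal.span {z ^ i}).restrictScalars K).subtype
            ((((Ideal.span {z ^ i}).restrictScalars K) ⊓
                LinearMap.ker (Algebra.lmul K A z)) ⊔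
              ((Ideal.span {z ^ (i + 1)}).restrictScalars K)))) := by
  classical
  -- key: characterization of ker of g i
  have key : ∀ (i : ℕ) (y : grPiece K A z i), g i y = 0 ↔
      y ∈ Submodule.map
        (Submodule.mkQ (Submodule.comap ((Ideal.span {z ^ i}).restrictScalars K).subtype
            ((Ideal.span {z ^ (i + 1)}).restrictScalars K)))
        (Submodule.comap ((Ideal.span {z ^ i}).restrictScalars K).subtype
          ((((Ideal.span {z ^ i}).restrictScalars K) ⊓
              LinearMap.ker (Algebra.lmul K A z)) ⊔
            ((Ideal.span {z ^ (i + 1)}).restrictScalars K))) := by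
    intro i y
    obtain ⟨⟨a, ha⟩, rfl⟩ := Submodule.Quotient.mk_surjective _ y
    have ha' : a ∈ Ideal.span {z ^ i} := ha
    obtain ⟨t, ht⟩ := Ideal.mem_span_singleton'.mp ha'
    have hza : z * a ∈ (Ideal.span {z ^ (i + 1)}).restrictScalars K := by
      show z * a ∈ Ideal.span {z ^ (i + 1)}
      refine Ideal.mem_span_singleton'.mpr ⟨t, ?_⟩
      rw [← ht, pow_succ]; ring
    have hgy : g i (Submodule.Quotient.mk ⟨a, ha⟩) = Submodule.Quotient.mk ⟨z * a, hza⟩ :=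
      hg i a ha hza
    constructor
    · intro h0
      rw [hgy, Submodule.Quotient.mk_eq_zero] at h0
      have hz2 : z * a ∈ Ideal.span {z ^ (i + 2)} := h0
      obtain ⟨s, hs⟩ := Ideal.mem_span_singleton'.mp hz2
      refine ⟨⟨a, ha⟩, ?_, rfl⟩
      have hmem : a - s * z ^ (i + 1) ∈
          (((Ideal.span {z ^ i}).restrictScalars K) ⊓
            LinearMap.ker (Algebra.lmul K A z)) := by
        constructor
        · show a - s * z ^ (i + 1) ∈ Ideal.span {z ^ i}
          refine Submodule.sub_mem _ ha' (Ideal.mem_span_singleton'.mpr ⟨s * z, ?_⟩)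
          rw [pow_succ]; ring
        · show (Algebra.lmul K A z) (a - s * z ^ (i + 1)) = 0
          have h1 : (Algebra.lmul K A z) (a - s * z ^ (i + 1)) = z * (a - s * z ^ (i + 1)) := rfl
          rw [h1, mul_sub, ← hs, pow_succ, pow_succ]; ring
      have hmem2 : s * z ^ (i + 1) ∈ (Ideal.span {z ^ (i + 1)}).restrictScalars K :=
        Ideal.mem_span_singleton'.mpr ⟨s, rfl⟩
      have hsum := Submodule.add_mem_sup hmem hmem2
      refine Submodule.mem_comap.mpr ?_
      simpa using hsum
    · rintro ⟨⟨b, hb⟩, hbmem, hbeq⟩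
      have hbmem' : b ∈ (((Ideal.span {z ^ i}).restrictScalars K) ⊓
          LinearMap.ker (Algebra.lmul K A z)) ⊔
            ((Ideal.span {z ^ (i + 1)}).restrictScalars K) := hbmem
      have hab : a - b ∈ Ideal.span {z ^ (i + 1)} := by
        have h2 := (Submodule.Quotient.eq _).mp hbeq.symm
        simpa using h2
      rw [hgy, Submodule.Quotient.mk_eq_zero]
      show z * a ∈ Ideal.span {z ^ (i + 2)}
      obtain ⟨c, hc, d, hd, hcd⟩ := Submodule.mem_sup.mp hbmem'
      have hzc : z * c = 0 := hc.2
      have hd' : d ∈ Ideal.span {z ^ (i + 1)} := hd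
      obtain ⟨u, hu⟩ := Ideal.mem_span_singleton'.mp hd'
      obtain ⟨v, hv⟩ := Ideal.mem_span_singleton'.mp hab
      have hsplit : z * a = z * (a - b) + z * c + z * d := by rw [← hcd]; ring
      rw [hsplit, hzc, ← hu, ← hv]
      refine Submodule.add_mem _ (Submodule.add_mem _ ?_ ?_) ?_
      · exact Ideal.mem_span_singleton'.mpr ⟨v, by rw [pow_succ, pow_succ]; ring⟩
      · simp
      · exact Ideal.mem_span_singleton'.mpr ⟨u, by rw [pow_succ, pow_succ]; ring⟩
  subst hE
  have hcomp : ∀ (i : ℕ) (x : DirectSum ℕ (fun j => grPiece K A z j)),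
      DirectSum.component K ℕ (fun j => grPiece K A z j) (i + 1)
        (DirectSum.toModule K ℕ (DirectSum ℕ (fun j => grPiece K A z j))
          (fun k => (DirectSum.lof K ℕ (fun j => grPiece K A z j) (k + 1)) ∘ₗ g k) x)
        = g i (DirectSum.component K ℕ (fun j => grPiece K A z j) i x) := by
    intro i
    suffices h : (DirectSum.component K ℕ (fun j => grPiece K A z j) (i + 1)) ∘ₗ
        (DirectSum.toModule K ℕ (DirectSum ℕ (fun j => grPiece K A z j))
          (fun k => (DirectSum.lof K ℕ (fun j => grPiece K A z j) (k + 1)) ∘ₗ g k)) =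
        (g i) ∘ₗ (DirectSum.component K ℕ (fun j => grPiece K A z j) i) by
      intro x; exact congrFun (congrArg DFunLike.coe h) x
    apply DirectSum.linearMap_ext
    intro j
    refine LinearMap.ext fun v => ?_
    simp only [LinearMap.comp_apply, DirectSum.toModule_lof, DirectSum.component.of]
    by_cases hji : j = i
    · subst hji; simp
    · rw [dif_neg (by omega), dif_neg hji, map_zero]
  apply le_antisymm
  · intro x hx
    rw [LinearMap.mem_ker] at hx
    have hxi : ∀ i, g i (x i) = 0 := by
      intro i
      have h3 := hcomp i x
      rw [hx] at h3
      simpa [← DirectSum.apply_eq_component] using h3.symm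
    rw [← DirectSum.sum_support_of (x := x)]
    refine Submodule.sum_mem _ (fun i _ => ?_)
    refine Submodule.mem_iSup_of_mem i ?_
    exact ⟨x i, (key i (x i)).mp (hxi i),
      DirectSum.lof_eq_of K ℕ (fun j => grPiece K A z j) i (x i)⟩
  · refine iSup_le (fun i => ?_)
    rintro x ⟨y, hy, rfl⟩
    rw [LinearMap.mem_ker]
    have hy0 : g i y = 0 := (key i y).mpr hy
    rw [DirectSum.toModule_lof, LinearMap.comp_apply, hy0, map_zero]
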